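/- Let n > 0, let a < b be real numbers, and let θ, θ′ : ℝ → ℝ be such that for every t ∈ [a,b], θ has derivative θ′(t) at t (within [a,b]) and θ′(t) ≤ −θ(t)²/n. Suppose θ(a) < 0. Then b − a < n/(−θ(a)). Equivalently, a solution of the differential inequality θ′ ≤ −θ²/n with θ(a) < 0 cannot remain finite on any interval of length at least n/(−θ(a)). -/

import Mathlib

/-- Finite-time blow-up (caustic formation): a solution of `θ' ≤ -θ²/n` with `θ a < 0`
cannot remain finite on an interval of length at least `n/(-θ a)`. -/
theorem stmt_6 (n : ℝ) (hn : 0 < n) (a b : ℝ) (hab : a < b)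
    (θ θ' : ℝ → ℝ)
    (hderiv : ∀ t ∈ Set.Icc a b, HasDerivWithinAt θ (θ' t) (Set.Icc a b) t)
    (hineq : ∀ t ∈ Set.Icc a b, θ' t ≤ -(θ t) ^ 2 / n)
    (ha : θ a < 0) :
    b - a < n / (-θ a) := by
  have hIcc : Convex ℝ (Set.Icc a b) := convex_Icc a b
  have hint : interior (Set.Icc a b) = Set.Ioo a b := interior_Icc
  have hcont : ContinuousOn θ (Set.Icc a b) := fun t ht =>
    (hderiv t ht).continuousWithinAt
  -- θ is antitone on [a,b]
  have hanti : AntitoneOn θ (Set.Icc a b) := by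
    apply antitoneOn_of_hasDerivWithinAt_nonpos hIcc hcont
    · intro x hx
      rw [hint] at hx ⊢
      exact (hderiv x (Set.Ioo_subset_Icc_self hx)).mono Set.Ioo_subset_Icc_self
    · intro x hx
      rw [hint] at hx
      have := hineq x (Set.Ioo_subset_Icc_self hx)
      have h2 : -(θ x) ^ 2 / n ≤ 0 :=
        div_nonpos_of_nonpos_of_nonneg (by nlinarith [sq_nonneg (θ x)]) hn.le
      linarith
  have haI : a ∈ Set.Icc a b := Set.left_mem_Icc.2 hab.le
  have hbI : b ∈ Set.Icc a b := Set.right_mem_Icc.2 hab.le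
  have hneg : ∀ t ∈ Set.Icc a b, θ t < 0 := fun t ht =>
    lt_of_le_of_lt (hanti haI ht ht.1) ha
  -- g t = (θ t)⁻¹ - t/n is monotone on [a,b]
  set g : ℝ → ℝ := fun t => (θ t)⁻¹ - t / n with hg
  have hmono : MonotoneOn g (Set.Icc a b) := by
    apply monotoneOn_of_hasDerivWithinAt_nonneg hIcc
      (f' := fun t => -(θ' t) / (θ t) ^ 2 - 1 / n)
    · exact fun t ht => ((hcont t ht).inv₀ (hneg t ht).ne).sub
        ((continuousOn_id.div_const n) t ht)
    · intro x hx
      rw [hint] at hx ⊢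
      have hx' := Set.Ioo_subset_Icc_self hx
      have hd := ((hderiv x hx').mono Set.Ioo_subset_Icc_self).inv (hneg x hx').ne
      have hd2 := hd.sub ((hasDerivWithinAt_id x (Set.Ioo a b)).div_const n)
      exact hd2
    · intro x hx
      rw [hint] at hx
      have hx' := Set.Ioo_subset_Icc_self hx
      have h1 := hineq x hx'
      have h2' : (0:ℝ) < (θ x) ^ 2 := by nlinarith [hneg x hx']
      have h1' : θ' x * n ≤ -(θ x) ^ 2 := (le_div_iff₀ hn).1 h1
      have h3 : 1 / n ≤ -(θ' x) / (θ x) ^ 2 := by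
        rw [div_le_div_iff₀ hn h2']
        nlinarith
      linarith
  have hgab := hmono haI hbI hab.le
  have hθb := hneg b hbI
  -- (b-a)/n ≤ 1/θ b - 1/θ a < -1/θ a
  have h1 : (b - a) / n ≤ (θ b)⁻¹ - (θ a)⁻¹ := by
    simp only [hg] at hgab
    have : (b - a)/n = b/n - a/n := by ring
    linarith [this]
  have h2 : (θ b)⁻¹ < 0 := inv_neg''.2 hθb
  have h3 : (b - a) / n < -(θ a)⁻¹ := by linarith
  have h4 : -(θ a)⁻¹ = (-θ a)⁻¹ := by rw [inv_neg]
  rw [div_lt_iff₀ hn] at h3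
  rw [div_eq_mul_inv, ← h4]
  linarith [h3]
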